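/- Every extreme ray of the polyhedral cone of Markov chains with fixed positive equilibrium P* (i.e., of nonnegative vectors (q_{ij}) satisfying the balance condition) is generated by a simple directed cycle A_{i_1} → ⋯ → A_{i_k} → A_{i_1} with rates q_{i_{j+1} i_j} = 1/p*_{i_j}. -/
import Mathlib

set_option linter.unnecessarySimpa false

lemma exists_pos_cycle {n : ℕ} (f : Fin n → Fin n → ℝ)
    (hnn : ∀ i j, 0 ≤ f i j) (hdiag : ∀ i, f i i = 0)
    (hbal : ∀ i, ∑ j, f i j = ∑ j, f j i)
    {a b : Fin n} (hab : 0 < f a b) :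
    ∃ (k : ℕ) (c : Fin (k + 2) → Fin n), Function.Injective c ∧
      ∀ l : Fin (k + 2), 0 < f (c (l + 1)) (c l) := by
  classical
  have key : ∀ v : Fin n, (∃ u, 0 < f v u) → ∃ w, 0 < f w v := by
    rintro v ⟨u, hu⟩
    by_contra h
    push_neg at h
    have h1 : ∑ j, f j v ≤ 0 := Finset.sum_nonpos fun j _ => h j
    have h2 : 0 < ∑ j, f v j :=
      Finset.sum_pos' (fun j _ => hnn v j) ⟨u, Finset.mem_univ u, hu⟩
    have := hbal v
    linarith
  choose w hw using key
  let g : ℕ → {v : Fin n // ∃ u, 0 < f v u} := fun m =>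
    Nat.rec ⟨a, ⟨b, hab⟩⟩ (fun _ p => ⟨w p.1 p.2, ⟨p.1, hw p.1 p.2⟩⟩) m
  have hg : ∀ m : ℕ, 0 < f (g (m + 1)).1 (g m).1 := fun m => hw _ _
  have hstep : ∀ m : ℕ, (g (m + 1)).1 ≠ (g m).1 := by
    intro m h
    have h2 := hg m
    rw [h, hdiag] at h2
    exact lt_irrefl 0 h2
  have hP : ∃ m : ℕ, ∃ a', a' < m ∧ (g a').1 = (g m).1 := by
    have hni : ¬ Function.Injective fun m : Fin (n + 1) => (g m).1 := by
      intro hinj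
      have := Fintype.card_le_of_injective _ hinj
      simpa using this
    rw [Function.not_injective_iff] at hni
    obtain ⟨m₁, m₂, heq, hne⟩ := hni
    rcases Ne.lt_or_gt hne with h | h
    · exact ⟨(m₂ : ℕ), (m₁ : ℕ), h, heq⟩
    · exact ⟨(m₁ : ℕ), (m₂ : ℕ), h, heq.symm⟩
  obtain ⟨A, hAB, hgAB⟩ := Nat.find_spec hP
  have hA2 : A + 2 ≤ Nat.find hP := by
    rcases Nat.lt_or_ge (Nat.find hP) (A + 2) with h | h
    · have hfind : Nat.find hP = A + 1 := by omega
      rw [hfind] at hgAB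
      exact absurd hgAB.symm (hstep A)
    · exact h
  set k := Nat.find hP - A - 2 with hk
  have hB : Nat.find hP = A + k + 2 := by omega
  have haux : ∀ l l' : Fin (k + 2), l.val < l'.val →
      (g (A + l.val)).1 ≠ (g (A + l'.val)).1 := by
    intro l l' hlt heq
    have hl2 := l'.isLt
    exact Nat.find_min hP (show A + l'.val < Nat.find hP by omega)
      ⟨A + l.val, by omega, heq⟩
  refine ⟨k, fun l => (g (A + l.val)).1, ?_, ?_⟩
  · intro l l' heq
    by_contra hne
    have hvne : l.val ≠ l'.val := fun h => hne (Fin.ext h)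
    rcases Nat.lt_or_ge l.val l'.val with h | h
    · exact haux l l' h heq
    · exact haux l' l (by omega) heq.symm
  · intro l
    rcases Nat.lt_or_ge (l.val + 1) (k + 2) with h | h
    · have h1 : ((l + 1 : Fin (k + 2))).val = l.val + 1 := by
        rw [Fin.val_add, Fin.val_one, Nat.mod_eq_of_lt h]
      show 0 < f (g (A + ((l + 1 : Fin (k + 2))).val)).1 (g (A + l.val)).1
      rw [h1, show A + (l.val + 1) = (A + l.val) + 1 by omega]
      exact hg (A + l.val)
    · have hl : l.val = k + 1 := by have := l.isLt; omega
      have h1 : ((l + 1 : Fin (k + 2))).val = 0 := by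
        rw [Fin.val_add, Fin.val_one, hl]
        have h2 : k + 1 + 1 = k + 2 := rfl
        rw [h2, Nat.mod_self]
      show 0 < f (g (A + ((l + 1 : Fin (k + 2))).val)).1 (g (A + l.val)).1
      rw [h1, hl]
      have h2 := hg (A + k + 1)
      rw [show A + k + 1 + 1 = Nat.find hP from by omega] at h2
      rw [show A + 0 = A from rfl, hgAB,
        show A + (k + 1) = A + k + 1 from by omega]
      exact h2

/-- Rate matrix of a simple directed cycle with rates `q_{c(l+1), c l} = 1/p*_{c l}`
(length `k + 2 ≥ 2`, pairwise distinct states), all other rates zero. -/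
def IsUnitSimpleCycleChain {n : ℕ} (ps : Fin n → ℝ)
    (Q : Fin n → Fin n → ℝ) : Prop :=
  ∃ (k : ℕ) (c : Fin (k + 2) → Fin n), Function.Injective c ∧
    (∀ l : Fin (k + 2), Q (c (l + 1)) (c l) = 1 / ps (c l)) ∧
    (∀ i j : Fin n, (¬ ∃ l : Fin (k + 2), i = c (l + 1) ∧ j = c l) → Q i j = 0)

/-- Every extreme ray of the polyhedral cone of Markov chains
with fixed positive equilibrium `P*` is generated by a simple directed cycle
with rates `1/p*_{i_j}`. -/
theorem extreme_rays_are_simple_cycles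
    (n : ℕ) (ps : Fin n → ℝ) (hps : ∀ i, 0 < ps i) :
    let C : Set (Fin n → Fin n → ℝ) :=
      {q | (∀ i j, i ≠ j → 0 ≤ q i j) ∧ (∀ i, q i i = 0) ∧
        ∀ i, ∑ j ∈ Finset.univ.erase i, q i j * ps j
          = (∑ j ∈ Finset.univ.erase i, q j i) * ps i}
    ∀ x : Fin n → Fin n → ℝ, x ∈ C → x ≠ 0 →
      -- the ray generated by `x` is extreme:
      (∀ u ∈ {v | ∃ c : ℝ, 0 ≤ c ∧ v = c • x}, ∀ y ∈ C, ∀ z ∈ C,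
        u = (2⁻¹ : ℝ) • (y + z) →
          y ∈ {v | ∃ c : ℝ, 0 ≤ c ∧ v = c • x} ∧
          z ∈ {v | ∃ c : ℝ, 0 ≤ c ∧ v = c • x}) →
      ∃ Q₀ : Fin n → Fin n → ℝ, IsUnitSimpleCycleChain ps Q₀ ∧
        ∃ c : ℝ, 0 < c ∧ x = c • Q₀ := by
  intro C x hxC hx0 hext
  classical
  obtain ⟨hx1, hx2, hx3⟩ := hxC
  have hxnn : ∀ i j, 0 ≤ x i j := by
    intro i j
    by_cases h : i = j
    · subst h; rw [hx2 i]
    · exact hx1 i j h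
  -- the flow
  set f : Fin n → Fin n → ℝ := fun i j => x i j * ps j with hf
  have hfnn : ∀ i j, 0 ≤ f i j := fun i j => mul_nonneg (hxnn i j) (hps j).le
  have hfdiag : ∀ i, f i i = 0 := fun i => by
    show x i i * ps i = 0; rw [hx2 i, zero_mul]
  have hfbal : ∀ i, ∑ j, f i j = ∑ j, f j i := by
    intro i
    have h1 : ∑ j ∈ Finset.univ.erase i, f i j = ∑ j, f i j :=
      Finset.sum_erase _ (hfdiag i)
    have h2 : ∑ j ∈ Finset.univ.erase i, f j i = ∑ j, f j i :=
      Finset.sum_erase _ (hfdiag i)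
    rw [← h1, ← h2]
    have h3 := hx3 i
    rw [Finset.sum_mul] at h3
    exact h3
  have hne : ∃ a b, 0 < f a b := by
    by_contra h
    push_neg at h
    apply hx0
    funext i j
    have h1 : x i j * ps j = 0 := le_antisymm (h i j) (hfnn i j)
    show x i j = 0
    rcases mul_eq_zero.mp h1 with h2 | h2
    · exact h2
    · exact absurd h2 (ne_of_gt (hps j))
  obtain ⟨a, b, hab⟩ := hne
  obtain ⟨k, cyc, hinj, hcyc⟩ := exists_pos_cycle f hfnn hfdiag hfbal hab
  have hxc : ∀ l : Fin (k + 2), 0 < x (cyc (l + 1)) (cyc l) := by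
    intro l
    have h1 : 0 < x (cyc (l + 1)) (cyc l) * ps (cyc l) := hcyc l
    nlinarith [hps (cyc l)]
  -- the unit cycle chain
  set Q₀ : Fin n → Fin n → ℝ := fun i j =>
    if ∃ l : Fin (k + 2), i = cyc (l + 1) ∧ j = cyc l then 1 / ps j else 0 with hQ
  have hQval : ∀ l : Fin (k + 2), Q₀ (cyc (l + 1)) (cyc l) = 1 / ps (cyc l) :=
    fun l => if_pos ⟨l, rfl, rfl⟩
  have hQzero : ∀ i j, (¬ ∃ l : Fin (k + 2), i = cyc (l + 1) ∧ j = cyc l) → Q₀ i j = 0 :=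
    fun i j h => if_neg h
  have hQnn : ∀ i j, 0 ≤ Q₀ i j := by
    intro i j
    show 0 ≤ if ∃ l : Fin (k + 2), i = cyc (l + 1) ∧ j = cyc l then 1 / ps j else 0
    split
    · exact le_of_lt (one_div_pos.mpr (hps j))
    · exact le_refl 0
  have hone : (1 : Fin (k + 2)) ≠ 0 := by
    intro h
    have h2 := congrArg Fin.val h
    rw [Fin.val_one, Fin.val_zero] at h2
    exact one_ne_zero h2
  have haddne : ∀ m : Fin (k + 2), m + 1 ≠ m := by
    intro m h
    apply hone
    have h2 : m + 1 = m + 0 := by rw [add_zero]; exact h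
    exact add_left_cancel h2
  have hsubne : ∀ m : Fin (k + 2), m - 1 ≠ m := by
    intro m h
    exact haddne (m - 1) (by rw [sub_add_cancel]; exact h.symm)
  have hQdiag : ∀ i, Q₀ i i = 0 := by
    intro i
    apply hQzero
    rintro ⟨l, h1, h2⟩
    exact haddne l (hinj (h1.symm.trans h2))
  have hrow : ∀ (m : Fin (k + 2)) (j : Fin n), j ≠ cyc (m - 1) → Q₀ (cyc m) j = 0 := by
    intro m j hj
    apply hQzero
    rintro ⟨l, h1, rfl⟩
    apply hj
    have hlm : l + 1 = m := hinj h1.symm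
    rw [← hlm, add_sub_cancel_right]
  have hcol : ∀ (m : Fin (k + 2)) (i : Fin n), i ≠ cyc (m + 1) → Q₀ i (cyc m) = 0 := by
    intro m i hi
    apply hQzero
    rintro ⟨l, rfl, h2⟩
    exact hi (by rw [hinj h2])
  have hQbal : ∀ i, ∑ j ∈ Finset.univ.erase i, Q₀ i j * ps j
      = (∑ j ∈ Finset.univ.erase i, Q₀ j i) * ps i := by
    intro i
    by_cases hi : ∃ m : Fin (k + 2), i = cyc m
    · obtain ⟨m, rfl⟩ := hi
      have hL : ∑ j ∈ Finset.univ.erase (cyc m), Q₀ (cyc m) j * ps j = 1 := by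
        rw [Finset.sum_eq_single_of_mem (cyc (m - 1))
          (Finset.mem_erase.mpr ⟨fun h => hsubne m (hinj h), Finset.mem_univ _⟩)
          (fun j _ hj => by rw [hrow m j hj, zero_mul])]
        have h1 : Q₀ (cyc m) (cyc (m - 1)) = 1 / ps (cyc (m - 1)) := by
          have h2 := hQval (m - 1)
          rwa [sub_add_cancel] at h2
        rw [h1, one_div, inv_mul_cancel₀ (ne_of_gt (hps _))]
      have hR : ∑ j ∈ Finset.univ.erase (cyc m), Q₀ j (cyc m) = 1 / ps (cyc m) := by
        rw [Finset.sum_eq_single_of_mem (cyc (m + 1))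
          (Finset.mem_erase.mpr ⟨fun h => haddne m (hinj h), Finset.mem_univ _⟩)
          (fun j _ hj => hcol m j hj)]
        exact hQval m
      rw [hL, hR, one_div, inv_mul_cancel₀ (ne_of_gt (hps _))]
    · push_neg at hi
      have hL : ∀ j ∈ Finset.univ.erase i, Q₀ i j * ps j = 0 := by
        intro j _
        rw [hQzero i j (by rintro ⟨l, h1, -⟩; exact hi (l + 1) h1), zero_mul]
      have hR : ∀ j ∈ Finset.univ.erase i, Q₀ j i = 0 := by
        intro j _
        exact hQzero j i (by rintro ⟨l, -, h2⟩; exact hi l h2)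
      rw [Finset.sum_eq_zero hL, Finset.sum_eq_zero hR, zero_mul]
  have hQC : Q₀ ∈ C := ⟨fun i j _ => hQnn i j, hQdiag, hQbal⟩
  -- C is closed under nonnegative scaling
  have hsmulC : ∀ t : ℝ, 0 ≤ t → ∀ q, q ∈ C → t • q ∈ C := by
    rintro t ht q ⟨h1, h2, h3⟩
    refine ⟨fun i j hij => ?_, fun i => ?_, fun i => ?_⟩
    · show 0 ≤ t * q i j
      exact mul_nonneg ht (h1 i j hij)
    · show t * q i i = 0
      rw [h2 i, mul_zero]
    · show ∑ j ∈ Finset.univ.erase i, t * q i j * ps j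
        = (∑ j ∈ Finset.univ.erase i, t * q j i) * ps i
      calc ∑ j ∈ Finset.univ.erase i, t * q i j * ps j
          = t * ∑ j ∈ Finset.univ.erase i, q i j * ps j := by
            rw [Finset.mul_sum]
            exact Finset.sum_congr rfl fun j _ => by ring
        _ = t * ((∑ j ∈ Finset.univ.erase i, q j i) * ps i) := by rw [h3 i]
        _ = (∑ j ∈ Finset.univ.erase i, t * q j i) * ps i := by
            rw [← Finset.mul_sum]; ring
  -- epsilon
  have hnem : (Finset.univ : Finset (Fin (k + 2))).Nonempty := Finset.univ_nonempty
  set ε : ℝ := Finset.univ.inf' hnem (fun l => x (cyc (l + 1)) (cyc l) * ps (cyc l)) with hε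
  have hεpos : 0 < ε := by
    rw [hε, Finset.lt_inf'_iff]
    exact fun l _ => mul_pos (hxc l) (hps (cyc l))
  have hεle : ∀ l : Fin (k + 2), ε ≤ x (cyc (l + 1)) (cyc l) * ps (cyc l) :=
    fun l => Finset.inf'_le _ (Finset.mem_univ l)
  -- y = x - ε Q₀
  set y : Fin n → Fin n → ℝ := fun i j => x i j - ε * Q₀ i j with hy
  have hyC : y ∈ C := by
    refine ⟨fun i j hij => ?_, fun i => ?_, fun i => ?_⟩
    · show 0 ≤ x i j - ε * Q₀ i j
      by_cases h : ∃ l : Fin (k + 2), i = cyc (l + 1) ∧ j = cyc l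
      · obtain ⟨l, rfl, rfl⟩ := h
        rw [hQval l, sub_nonneg, mul_one_div, div_le_iff₀ (hps (cyc l))]
        exact hεle l
      · rw [hQzero i j h, mul_zero, sub_zero]
        exact hx1 i j hij
    · show x i i - ε * Q₀ i i = 0
      rw [hx2 i, hQdiag i, mul_zero, sub_zero]
    · show ∑ j ∈ Finset.univ.erase i, (x i j - ε * Q₀ i j) * ps j
        = (∑ j ∈ Finset.univ.erase i, (x j i - ε * Q₀ j i)) * ps i
      calc ∑ j ∈ Finset.univ.erase i, (x i j - ε * Q₀ i j) * ps j
          = ∑ j ∈ Finset.univ.erase i, (x i j * ps j - ε * (Q₀ i j * ps j)) :=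
            Finset.sum_congr rfl fun j _ => by ring
        _ = ∑ j ∈ Finset.univ.erase i, x i j * ps j
            - ε * ∑ j ∈ Finset.univ.erase i, Q₀ i j * ps j := by
            rw [Finset.sum_sub_distrib, Finset.mul_sum]
        _ = (∑ j ∈ Finset.univ.erase i, x j i) * ps i
            - ε * ((∑ j ∈ Finset.univ.erase i, Q₀ j i) * ps i) := by
            rw [hx3 i, hQbal i]
        _ = (∑ j ∈ Finset.univ.erase i, (x j i - ε * Q₀ j i)) * ps i := by
            rw [Finset.sum_sub_distrib, ← Finset.mul_sum]
            ring
  have hxray : x ∈ {v : Fin n → Fin n → ℝ | ∃ c : ℝ, 0 ≤ c ∧ v = c • x} :=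
    ⟨1, zero_le_one, (one_smul ℝ x).symm⟩
  have hy2C : (2 : ℝ) • y ∈ C := hsmulC 2 (by norm_num) y hyC
  have hz2C : ((2 : ℝ) * ε) • Q₀ ∈ C := hsmulC (2 * ε) (by positivity) Q₀ hQC
  have hdecomp : x = (2⁻¹ : ℝ) • ((2 : ℝ) • y + ((2 : ℝ) * ε) • Q₀) := by
    funext i j
    show x i j = 2⁻¹ * (2 * (x i j - ε * Q₀ i j) + 2 * ε * Q₀ i j)
    ring
  obtain ⟨-, hzray⟩ := hext x hxray ((2 : ℝ) • y) hy2C (((2 : ℝ) * ε) • Q₀) hz2C hdecomp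
  obtain ⟨t, ht0, htz⟩ := hzray
  have happ : 2 * ε * Q₀ (cyc (0 + 1)) (cyc 0) = t * x (cyc (0 + 1)) (cyc 0) := by
    have h := congrFun (congrFun htz (cyc (0 + 1))) (cyc 0)
    simpa using h
  have htpos : 0 < t := by
    rw [hQval 0] at happ
    have h1 : 0 < 2 * ε * (1 / ps (cyc 0)) :=
      mul_pos (by linarith) (one_div_pos.mpr (hps _))
    rcases lt_or_ge 0 t with h | h
    · exact h
    · exfalso
      have h2 : t * x (cyc (0 + 1)) (cyc 0) ≤ 0 :=
        mul_nonpos_iff.mpr (Or.inr ⟨h, (hxc 0).le⟩)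
      rw [happ] at h1
      exact absurd h1 (not_lt.mpr h2)
  refine ⟨Q₀, ⟨k, cyc, hinj, hQval, hQzero⟩, 2 * ε / t,
    div_pos (by linarith) htpos, ?_⟩
  funext i j
  have h := congrFun (congrFun htz i) j
  simp only [Pi.smul_apply, smul_eq_mul] at h ⊢
  rw [div_mul_eq_mul_div, eq_div_iff (ne_of_gt htpos)]
  linarith [h]
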